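/- Let (Γ_n)_{n ∈ ℕ} be a family of icc groups and Γ = ⊕_{n ∈ ℕ} Γ_n their restricted direct sum. If B is a normal subgroup of Γ such that for every k the subgroup B_k := B ∩ (⊕_{n ≠ k} Γ_n) has finite index in B, then B is trivial. -/

import Mathlib

/-- If B is a normal subgroup of a restricted direct sum of icc groups such that
B ∩ (⊕_{n ≠ k} Γ_n) has finite index in B for every k, then B is trivial. -/
theorem stmt6 (Γ : ℕ → Type*) [∀ n, Group (Γ n)]
    (hicc : ∀ n, ∀ g : Γ n, g ≠ 1 → {x : Γ n | ∃ h : Γ n, h * g * h⁻¹ = x}.Infinite)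
    (B : Subgroup (∀ n, Γ n))
    (hsupp : ∀ f ∈ B, {n | f n ≠ 1}.Finite)
    (hnorm : ∀ g : ∀ n, Γ n, {n | g n ≠ 1}.Finite → ∀ b ∈ B, g * b * g⁻¹ ∈ B)
    (hfin : ∀ k : ℕ, (MonoidHom.ker (Pi.evalMonoidHom Γ k)).relIndex B ≠ 0) :
    B = ⊥ := by
  rw [Subgroup.eq_bot_iff_forall]
  intro b hb
  by_contra hb1
  -- find a coordinate where b is nontrivial
  obtain ⟨k, hk⟩ : ∃ k, b k ≠ 1 := by
    by_contra h
    push_neg at h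
    exact hb1 (funext fun n => h n)
  -- the restriction of evaluation at k to B
  set φ : B →* Γ k := (Pi.evalMonoidHom Γ k).comp B.subtype with hφ
  have hker : MonoidHom.ker φ = (MonoidHom.ker (Pi.evalMonoidHom Γ k)).subgroupOf B := rfl
  -- the range of φ is finite
  have hcard : Nat.card (B ⧸ MonoidHom.ker φ) ≠ 0 := by
    have : (MonoidHom.ker φ).index ≠ 0 := by
      rw [hker]; exact hfin k
    simpa [Subgroup.index] using this
  have hfinq : Finite (B ⧸ MonoidHom.ker φ) := (Nat.card_ne_zero.mp hcard).2
  have hfinr : Finite φ.range :=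
    Finite.of_equiv _ (QuotientGroup.quotientKerEquivRange φ).toEquiv
  have hfinset : (φ.range : Set (Γ k)).Finite := Set.toFinite _
  -- the conjugacy class of b k lies in the range of φ
  have hsub : {x : Γ k | ∃ h : Γ k, h * b k * h⁻¹ = x} ⊆ (φ.range : Set (Γ k)) := by
    rintro x ⟨h, rfl⟩
    set g : ∀ n, Γ n := Function.update 1 k h with hg
    have hgfin : {n | g n ≠ 1}.Finite := by
      apply Set.Finite.subset (Set.finite_singleton k)
      intro n hn
      by_contra hnk
      exact hn (by simp [hg, Function.update_of_ne hnk])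
    have hmem : g * b * g⁻¹ ∈ B := hnorm g hgfin b hb
    refine ⟨⟨g * b * g⁻¹, hmem⟩, ?_⟩
    simp [hφ, Pi.evalMonoidHom, hg, Pi.mul_apply, Pi.inv_apply]
  exact (hicc k (b k) hk).mono hsub hfinset
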